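/- For the embedded chain P of the M/G/1 queue with parameter z > 1, the ratio sequence r_n(i) := (∑_{m=i+1}^{n} H_m^{(n)})/(∑_{k=1}^{n} P_0^{(k+)}·H_k^{(n)}) satisfies: if 1 < z < 2 then lim_{n→∞} r_n(i) = (z−1)^i/(2−z) for every i ≥ 0, while if z ≥ 2 then r_n(i) → +∞ as n → ∞ for every i ≥ 0. Consequently the chain is transient if and only if 1 < z < 2. -/

import Mathlib

open scoped ENNReal
open Filter Topology

/-- Matrix powers of a nonnegative kernel on ℕ, values in `[0,∞]`. -/
noncomputable def matPow (P : ℕ → ℕ → ℝ≥0∞) : ℕ → ℕ → ℕ → ℝ≥0∞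
  | 0, i, j => if i = j then 1 else 0
  | k + 1, i, j => ∑' l : ℕ, matPow P k i l * P l j

/-- The potential `φ(i) = ∑_{k=0}^∞ ∑_j P^k(i,j) c(j)`. -/
noncomputable def potential (P : ℕ → ℕ → ℝ≥0∞) (c : ℕ → ℝ≥0∞) (i : ℕ) : ℝ≥0∞ :=
  ∑' k : ℕ, ∑' j : ℕ, matPow P k i j * c j

/-- The Green matrix `G(i,j) = ∑_{k=0}^∞ P^k(i,j)`. -/
noncomputable def green (P : ℕ → ℕ → ℝ≥0∞) (i j : ℕ) : ℝ≥0∞ :=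
  ∑' k : ℕ, matPow P k i j

/-- `P_m^{(k+)} = ∑_{i=k}^∞ P(m,i)`. -/
noncomputable def Pplus (P : ℕ → ℕ → ℝ≥0∞) (m k : ℕ) : ℝ≥0∞ :=
  ∑' l : ℕ, P m (k + l)

/-- `H P i m = H_m^{(i)}`: `H_i^{(i)} = 1` and
`H_m^{(i)} = (1/P(m,m-1)) ∑_{k=m+1}^{i} P_m^{(k+)} H_k^{(i)}` for `1 ≤ m < i`. -/
noncomputable def H (P : ℕ → ℕ → ℝ≥0∞) (i : ℕ) : ℕ → ℝ≥0∞
  | m =>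
    if i ≤ m then 1
    else (P m (m - 1))⁻¹ *
      ∑ k ∈ (Finset.Ioc m i).attach, Pplus P m k.1 * H P i k.1
  termination_by m => i - m
  decreasing_by
    have h := Finset.mem_Ioc.mp k.2
    omega

/-- The ratio `r_n(i) = (∑_{m=i+1}^n H_m^{(n)}) / (∑_{k=1}^n P_0^{(k+)} H_k^{(n)})`. -/
noncomputable def ratio (P : ℕ → ℕ → ℝ≥0∞) (i n : ℕ) : ℝ :=
  (∑ m ∈ Finset.Icc (i + 1) n, (H P n m).toReal) /
    (∑ k ∈ Finset.Icc 1 n, (Pplus P 0 k).toReal * (H P n k).toReal)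

/-- The embedded chain of the `M/G/1` queue with parameter `z`:
`P(0,j) = a_j = (z-1)/z^(j+1)`, and for `i ≥ 1`, `P(i,j) = a_{j-i+1} = (z-1)/z^(j-i+2)`
for `j ≥ i-1` and `P(i,j) = 0` for `j < i-1`. -/
noncomputable def mG1 (z : ℝ) : ℕ → ℕ → ℝ≥0∞ := fun i j =>
  if i = 0 then ENNReal.ofReal ((z - 1) / z ^ (j + 1))
  else if i - 1 ≤ j then ENNReal.ofReal ((z - 1) / z ^ (j - (i - 1) + 1))
  else 0

lemma mG1_zero {z : ℝ} (j : ℕ) : mG1 z 0 j = ENNReal.ofReal ((z - 1) / z ^ (j + 1)) := by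
  simp [mG1]

lemma mG1_pos {z : ℝ} {i j : ℕ} (hi : i ≠ 0) (hj : i - 1 ≤ j) :
    mG1 z i j = ENNReal.ofReal ((z - 1) / z ^ (j - (i - 1) + 1)) := by
  simp [mG1, hi, hj]

lemma mG1_pos_zero {z : ℝ} {i j : ℕ} (hi : i ≠ 0) (hj : j < i - 1) : mG1 z i j = 0 := by
  simp [mG1, hi, Nat.not_le.mpr hj]

lemma tsum_ofReal_geom_mul {z : ℝ} (hz : 1 < z) (c : ℝ) (hc : 0 ≤ c) :
    ∑' l : ℕ, ENNReal.ofReal (c * z⁻¹ ^ l) = ENNReal.ofReal (c * (z / (z - 1))) := by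
  have hz0 : (0:ℝ) < z := lt_trans one_pos hz
  have h0 : (0:ℝ) ≤ z⁻¹ := by positivity
  have h1 : z⁻¹ < 1 := by rw [inv_lt_one_iff₀]; right; exact hz
  rw [← ENNReal.ofReal_tsum_of_nonneg (fun l => by positivity)
      ((summable_geometric_of_lt_one h0 h1).mul_left c)]
  congr 1
  rw [tsum_mul_left, tsum_geometric_of_lt_one h0 h1]
  congr 1
  field_simp

lemma Pplus_zero {z : ℝ} (hz : 1 < z) (k : ℕ) :
    Pplus (mG1 z) 0 k = ENNReal.ofReal (z⁻¹ ^ k) := by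
  have hz0 : (0:ℝ) < z := lt_trans one_pos hz
  have hz1 : (0:ℝ) < z - 1 := by linarith
  unfold Pplus
  have he : ∀ l : ℕ, mG1 z 0 (k + l) = ENNReal.ofReal ((z - 1) / z ^ (k+1) * z⁻¹ ^ l) := by
    intro l
    rw [mG1_zero]
    congr 1
    rw [pow_add]
    field_simp
    rw [one_div, inv_pow, pow_add, pow_succ]; field_simp; rw [pow_add]
  simp only [he]
  rw [tsum_ofReal_geom_mul hz _ (by positivity)]
  congr 1
  rw [pow_succ]
  field_simp
  rw [← mul_pow, mul_one_div_cancel hz0.ne', one_pow]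

lemma Pplus_pos {z : ℝ} (hz : 1 < z) {m k : ℕ} (hm : 1 ≤ m) (hk : m ≤ k) :
    Pplus (mG1 z) m k = ENNReal.ofReal (z⁻¹ ^ (k + 1 - m)) := by
  have hz0 : (0:ℝ) < z := lt_trans one_pos hz
  have hz1 : (0:ℝ) < z - 1 := by linarith
  unfold Pplus
  have he : ∀ l : ℕ, mG1 z m (k + l)
      = ENNReal.ofReal ((z - 1) / z ^ (k + 1 - m + 1) * z⁻¹ ^ l) := by
    intro l
    rw [mG1_pos (by omega) (by omega)]
    congr 1
    have : k + l - (m - 1) + 1 = (k + 1 - m + 1) + l := by omega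
    rw [this, pow_add]
    field_simp
    rw [one_div, inv_pow, mul_inv_cancel₀ (pow_ne_zero _ hz0.ne')]
  simp only [he]
  rw [tsum_ofReal_geom_mul hz _ (by positivity)]
  congr 1
  rw [pow_succ]
  field_simp
  rw [← mul_pow, mul_one_div_cancel hz0.ne', one_pow]

lemma Hsum_real' {z : ℝ} (hz : 1 < z) : ∀ f : ℕ,
    ∑ j ∈ Finset.range f, z⁻¹ ^ (j+2) * (z⁻¹ * ((z-1)⁻¹) ^ (f-j)) + z⁻¹ ^ (f+2)
      = (z-1) * z⁻¹ * (z⁻¹ * ((z-1)⁻¹) ^ (f+1)) := by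
  have hz0 : (0:ℝ) < z := lt_trans one_pos hz
  have hzne : z ≠ 0 := ne_of_gt hz0
  have hz1 : z - 1 ≠ 0 := sub_ne_zero.mpr (ne_of_gt hz)
  intro f
  induction f with
  | zero => simp; field_simp
  | succ f IH =>
    rw [Finset.sum_range_succ]
    have hc : ∀ j ∈ Finset.range f,
        z⁻¹ ^ (j+2) * (z⁻¹ * ((z-1)⁻¹) ^ (f+1-j))
          = (z⁻¹ ^ (j+2) * (z⁻¹ * ((z-1)⁻¹) ^ (f-j))) * (z-1)⁻¹ := by
      intro j hj
      have hj' : j < f := Finset.mem_range.mp hj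
      have : f + 1 - j = (f - j) + 1 := by omega
      rw [this, pow_succ]
      ring
    rw [Finset.sum_congr rfl hc, ← Finset.sum_mul]
    have hA : ∑ j ∈ Finset.range f, z⁻¹ ^ (j+2) * (z⁻¹ * ((z-1)⁻¹) ^ (f-j))
        = (z-1) * z⁻¹ * (z⁻¹ * ((z-1)⁻¹) ^ (f+1)) - z⁻¹ ^ (f+2) := by linarith [IH]
    rw [hA]
    have h1 : f + 1 - f = 1 := by omega
    rw [h1]
    rw [pow_succ ((z-1)⁻¹) (f+1), pow_succ z⁻¹ (f+2)]
    field_simp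
    ring

lemma H_top {P : ℕ → ℕ → ℝ≥0∞} {n m : ℕ} (h : n ≤ m) : H P n m = 1 := by
  rw [H, if_pos h]

lemma H_eval {z : ℝ} (hz : 1 < z) (n : ℕ) : ∀ d m, 1 ≤ m → m < n → n - m = d →
    H (mG1 z) n m = ENNReal.ofReal (z⁻¹ * ((z-1)⁻¹) ^ (n - m)) := by
  have hz0 : (0:ℝ) < z := lt_trans one_pos hz
  have hzne : z ≠ 0 := ne_of_gt hz0
  have hz1 : (0:ℝ) < z - 1 := by linarith
  intro d
  induction d using Nat.strong_induction_on with
  | _ d ih =>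
    intro m h1 h2 hd
    rw [H, if_neg (by omega)]
    rw [Finset.sum_attach (Finset.Ioc m n) (fun k => Pplus (mG1 z) m k * H (mG1 z) n k)]
    -- evaluate P m (m-1)
    have hP : mG1 z m (m-1) = ENNReal.ofReal ((z-1) * z⁻¹) := by
      rw [mG1_pos (by omega) (le_refl _)]
      congr 1
      have : m - 1 - (m - 1) + 1 = 1 := by omega
      rw [this, pow_one]
      field_simp
    -- split off k = n
    have hsplit : Finset.Ioc m n = insert n (Finset.Ioc m (n-1)) := by
      ext x; simp [Finset.mem_Ioc, Finset.mem_insert]; omega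
    rw [hsplit, Finset.sum_insert (by simp; omega)]
    -- k = n term
    rw [Pplus_pos hz (by omega) (by omega), H_top (le_refl n), mul_one]
    -- inner terms
    have hterm : ∀ k ∈ Finset.Ioc m (n-1),
        Pplus (mG1 z) m k * H (mG1 z) n k
          = ENNReal.ofReal (z⁻¹ ^ (k + 1 - m) * (z⁻¹ * ((z-1)⁻¹) ^ (n - k))) := by
      intro k hk
      have hk' : m < k ∧ k ≤ n - 1 := Finset.mem_Ioc.mp hk
      rw [Pplus_pos hz (by omega) (by omega),
        ih (n - k) (by omega) k (by omega) (by omega) rfl,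
        ← ENNReal.ofReal_mul (by positivity)]
    rw [Finset.sum_congr rfl hterm]
    rw [← ENNReal.ofReal_sum_of_nonneg (fun k _ => by positivity)]
    rw [← ENNReal.ofReal_add (by positivity) (by positivity)]
    rw [hP, ← ENNReal.ofReal_inv_of_pos (by positivity),
      ← ENNReal.ofReal_mul (by positivity)]
    congr 1
    -- now a real identity; reindex the sum
    have hIoc : Finset.Ioc m (n-1) = Finset.Ico (m+1) n := by
      ext x; simp [Finset.mem_Ioc, Finset.mem_Ico]; omega
    rw [hIoc, Finset.sum_Ico_eq_sum_range]
    have hrange : n - (m + 1) = (n - m) - 1 := by omega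
    have hcong : ∀ j ∈ Finset.range (n - (m+1)),
        z⁻¹ ^ (m + 1 + j + 1 - m) * (z⁻¹ * ((z-1)⁻¹) ^ (n - (m + 1 + j)))
          = z⁻¹ ^ (j + 2) * (z⁻¹ * ((z-1)⁻¹) ^ ((n - m - 1) - j)) := by
      intro j hj
      have hj' : j < n - (m+1) := Finset.mem_range.mp hj
      have e1 : m + 1 + j + 1 - m = j + 2 := by omega
      have e2 : n - (m + 1 + j) = n - m - 1 - j := by omega
      rw [e1, e2]
    rw [Finset.sum_congr (by rw [hrange]) (by rw [← hrange]; exact hcong)]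
    have e3 : n + 1 - m = (n - m - 1) + 2 := by omega
    have e4 : n - m = (n - m - 1) + 1 := by omega
    rw [e3, e4]
    have := Hsum_real' hz (n - m - 1)
    simp only [Nat.add_sub_cancel]
    rw [add_comm, this, inv_mul_cancel_left₀ (by positivity)]
lemma num_eq {z : ℝ} (hz : 1 < z) {i n : ℕ} (hn : i + 1 ≤ n) :
    ∑ m ∈ Finset.Icc (i+1) n, (H (mG1 z) n m).toReal
      = 1 + ∑ m ∈ Finset.Icc (i+1) (n-1), z⁻¹ * ((z-1)⁻¹)^(n-m) := by
  have hz0 : (0:ℝ) < z := lt_trans one_pos hz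
  have hz1 : (0:ℝ) < z - 1 := by linarith
  have hsplit : Finset.Icc (i+1) n = insert n (Finset.Icc (i+1) (n-1)) := by
    ext x; simp [Finset.mem_Icc, Finset.mem_insert]; omega
  rw [hsplit, Finset.sum_insert (by simp; omega), H_top (le_refl n)]
  simp only [ENNReal.toReal_one]
  congr 1
  apply Finset.sum_congr rfl
  intro m hm
  have hm' := Finset.mem_Icc.mp hm
  rw [H_eval hz n (n-m) m (by omega) (by omega) rfl, ENNReal.toReal_ofReal (by positivity)]

lemma den_eq {z : ℝ} (hz : 1 < z) {n : ℕ} (hn : 1 ≤ n) :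
    ∑ k ∈ Finset.Icc 1 n, (Pplus (mG1 z) 0 k).toReal * (H (mG1 z) n k).toReal
      = z⁻¹^n + ∑ k ∈ Finset.Icc 1 (n-1), z⁻¹^k * (z⁻¹ * ((z-1)⁻¹)^(n-k)) := by
  have hz0 : (0:ℝ) < z := lt_trans one_pos hz
  have hz1 : (0:ℝ) < z - 1 := by linarith
  have hsplit : Finset.Icc 1 n = insert n (Finset.Icc 1 (n-1)) := by
    ext x; simp [Finset.mem_Icc, Finset.mem_insert]; omega
  rw [hsplit, Finset.sum_insert (by simp; omega), H_top (le_refl n),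
    Pplus_zero hz]
  simp only [ENNReal.toReal_one, mul_one, ENNReal.toReal_ofReal (by positivity : (0:ℝ) ≤ z⁻¹ ^ n)]
  congr 1
  apply Finset.sum_congr rfl
  intro k hk
  have hk' := Finset.mem_Icc.mp hk
  rw [H_eval hz n (n-k) k (by omega) (by omega) rfl, Pplus_zero hz,
    ENNReal.toReal_ofReal (by positivity), ENNReal.toReal_ofReal (by positivity)]

lemma sum_Icc_geom {y : ℝ} (hy : y ≠ 1) (a n : ℕ) (hn : 1 ≤ n) :
    ∑ m ∈ Finset.Icc a (n-1), y^m = y^a * ((y^(n-a) - 1)/(y-1)) := by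
  have hIoc : Finset.Icc a (n-1) = Finset.Ico a n := by
    ext m; simp [Finset.mem_Icc, Finset.mem_Ico]; omega
  rw [hIoc, Finset.sum_Ico_eq_sum_range]
  simp only [pow_add]
  rw [← Finset.mul_sum, geom_sum_eq hy]

lemma ratio_tendsto_lt {z : ℝ} (hz : 1 < z) (hz2 : z < 2) (i : ℕ) :
    Tendsto (fun n => ratio (mG1 z) i n) atTop (𝓝 ((z - 1) ^ i / (2 - z))) := by
  have hz0 : (0:ℝ) < z := lt_trans one_pos hz
  have hr0 : (0:ℝ) < z - 1 := by linarith
  have hr1 : z - 1 < 1 := by linarith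
  have hrne1 : z - 1 ≠ 1 := ne_of_lt hr1
  have hx0 : (0:ℝ) < (z-1) * z⁻¹ := by positivity
  have hx1 : (z-1) * z⁻¹ < 1 := by
    rw [mul_inv_lt_iff₀ hz0, one_mul]; linarith
  have hxne1 : (z-1) * z⁻¹ ≠ 1 := ne_of_lt hx1
  set r : ℝ := z - 1 with hrdef
  set x : ℝ := (z-1) * z⁻¹ with hxdef
  set A : ℕ → ℝ := fun n => r^n + z⁻¹ * (r^(i+1) * ((r^(n-(i+1)) - 1)/(r - 1))) with hAdef
  set B : ℕ → ℝ := fun n => x^n + z⁻¹ * (x^1 * ((x^(n-1) - 1)/(x - 1))) with hBdef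
  have hrpow : Tendsto (fun n : ℕ => r^n) atTop (𝓝 0) :=
    tendsto_pow_atTop_nhds_zero_of_lt_one (le_of_lt hr0) hr1
  have hxpow : Tendsto (fun n : ℕ => x^n) atTop (𝓝 0) :=
    tendsto_pow_atTop_nhds_zero_of_lt_one (le_of_lt hx0) hx1
  have hAlim : Tendsto A atTop (𝓝 (0 + z⁻¹ * (r^(i+1) * ((0 - 1)/(r - 1))))) := by
    apply Tendsto.add hrpow
    apply Tendsto.const_mul
    apply Tendsto.const_mul
    apply Tendsto.div_const
    apply Tendsto.sub_const
    exact hrpow.comp (tendsto_sub_atTop_nat (i+1))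
  have hBlim : Tendsto B atTop (𝓝 (0 + z⁻¹ * (x^1 * ((0 - 1)/(x - 1))))) := by
    apply Tendsto.add hxpow
    apply Tendsto.const_mul
    apply Tendsto.const_mul
    apply Tendsto.div_const
    apply Tendsto.sub_const
    exact hxpow.comp (tendsto_sub_atTop_nat 1)
  have hBval : (0:ℝ) + z⁻¹ * (x^1 * ((0 - 1)/(x - 1))) = x := by
    have hxm1 : x - 1 = -z⁻¹ := by rw [hxdef]; field_simp; ring
    rw [hxm1]; field_simp; ring
  have hBne : (0:ℝ) + z⁻¹ * (x^1 * ((0 - 1)/(x - 1))) ≠ 0 := by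
    rw [hBval]; exact ne_of_gt hx0
  have heq : ∀ᶠ n in atTop, A n / B n = ratio (mG1 z) i n := by
    filter_upwards [eventually_ge_atTop (i+1)] with n hn
    have hn1 : 1 ≤ n := by omega
    have hrn : r^n ≠ 0 := pow_ne_zero _ (ne_of_gt hr0)
    unfold ratio
    rw [num_eq hz hn, den_eq hz hn1]
    conv_rhs => rw [← mul_div_mul_right _ _ hrn]
    congr 1
    · -- numerator
      rw [add_mul, one_mul, Finset.sum_mul]
      have hterm : ∀ m ∈ Finset.Icc (i+1) (n-1),
          z⁻¹ * ((z-1)⁻¹)^(n-m) * r^n = z⁻¹ * r^m := by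
        intro m hm
        have hm' := Finset.mem_Icc.mp hm
        have hsplitn : r^n = r^(n-m) * r^m := by
          rw [← pow_add]; congr 1; omega
        rw [hsplitn, mul_assoc, inv_pow, ← mul_assoc ((r^(n-m))⁻¹),
          inv_mul_cancel₀ (pow_ne_zero _ (ne_of_gt hr0)), one_mul]
      rw [Finset.sum_congr rfl hterm, ← Finset.mul_sum,
        sum_Icc_geom hrne1 (i+1) n hn1]
    · -- denominator
      rw [add_mul, Finset.sum_mul]
      have hfirst : z⁻¹^n * r^n = x^n := by rw [hxdef, mul_pow, mul_comm]
      have hterm : ∀ k ∈ Finset.Icc 1 (n-1),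
          z⁻¹^k * (z⁻¹ * ((z-1)⁻¹)^(n-k)) * r^n = z⁻¹ * x^k := by
        intro k hk
        have hk' := Finset.mem_Icc.mp hk
        have hsplitn : r^n = r^(n-k) * r^k := by
          rw [← pow_add]; congr 1; omega
        rw [hsplitn, hxdef, mul_pow]
        rw [inv_pow]
        simp only [hrdef]
        field_simp
        ring
        rw [inv_pow, inv_mul_cancel₀ (pow_ne_zero (n-k) (show (-1+z:ℝ) ≠ 0 from ne_of_gt (by linarith))), one_mul]
      rw [Finset.sum_congr rfl hterm, ← Finset.mul_sum,
        sum_Icc_geom hxne1 1 n hn1, hfirst]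
  have hrm1 : r - 1 ≠ 0 := by rw [hrdef]; intro h; apply hrne1; linarith
  have hval : (0 + z⁻¹ * (r^(i+1) * ((0 - 1)/(r - 1)))) / (0 + z⁻¹ * (x^1 * ((0 - 1)/(x - 1))))
      = (z - 1)^i / (2 - z) := by
    have h2z : (2:ℝ) - z ≠ 0 := by intro h; linarith
    rw [hBval, hxdef, ← hrdef, pow_succ,
      show r - 1 = -(2-z) by rw [hrdef]; ring]
    rw [show ((0:ℝ) - 1)/(-(2-z)) = (2-z)⁻¹ by rw [zero_sub, neg_div_neg_eq, one_div]]
    field_simp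
    first
    | ring
    | rw [div_self (show z - 2 ≠ 0 by intro h; apply h2z; linarith)]
  rw [← hval]
  exact Tendsto.congr' heq (hAlim.div hBlim hBne)

lemma den_pos {z : ℝ} (hz : 1 < z) {n : ℕ} (hn : 1 ≤ n) :
    0 < ∑ k ∈ Finset.Icc 1 n, (Pplus (mG1 z) 0 k).toReal * (H (mG1 z) n k).toReal := by
  have hz0 : (0:ℝ) < z := lt_trans one_pos hz
  have hz1 : (0:ℝ) < z - 1 := by linarith
  rw [den_eq hz hn]
  have h1 : (0:ℝ) < z⁻¹^n := by positivity
  have h2 : (0:ℝ) ≤ ∑ k ∈ Finset.Icc 1 (n-1), z⁻¹^k * (z⁻¹ * ((z-1)⁻¹)^(n-k)) :=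
    Finset.sum_nonneg (fun k _ => by positivity)
  linarith

lemma num_ge_one {z : ℝ} (hz : 1 < z) {i n : ℕ} (hn : i + 1 ≤ n) :
    1 ≤ ∑ m ∈ Finset.Icc (i+1) n, (H (mG1 z) n m).toReal := by
  have hz0 : (0:ℝ) < z := lt_trans one_pos hz
  have hz1 : (0:ℝ) < z - 1 := by linarith
  rw [num_eq hz hn]
  have h2 : (0:ℝ) ≤ ∑ m ∈ Finset.Icc (i+1) (n-1), z⁻¹ * ((z-1)⁻¹)^(n-m) :=
    Finset.sum_nonneg (fun m _ => by positivity)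
  linarith

lemma ratio_tendsto_ge {z : ℝ} (hz : 1 < z) (hz2 : 2 ≤ z) (i : ℕ) :
    Tendsto (fun n => ratio (mG1 z) i n) atTop atTop := by
  have hz0 : (0:ℝ) < z := lt_trans one_pos hz
  have hz1 : (0:ℝ) < z - 1 := by linarith
  rcases eq_or_lt_of_le hz2 with heq | hgt
  · -- z = 2
    subst heq
    have hnum : ∀ n : ℕ, i + 1 ≤ n →
        ∑ m ∈ Finset.Icc (i+1) n, (H (mG1 (2:ℝ)) n m).toReal
          = 1 + 2⁻¹ * ((n - 1 - i : ℕ) : ℝ) := by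
      intro n hn
      rw [num_eq (by norm_num) hn]
      congr 1
      have hc : ∀ m ∈ Finset.Icc (i+1) (n-1),
          (2:ℝ)⁻¹ * (((2:ℝ)-1)⁻¹)^(n-m) = 2⁻¹ := by
        intro m hm; norm_num
      rw [Finset.sum_congr rfl hc, Finset.sum_const, Nat.card_Icc, nsmul_eq_mul]
      rw [mul_comm]
      congr 2
      omega
    have hden_le : ∀ n : ℕ, 1 ≤ n →
        ∑ k ∈ Finset.Icc 1 n, (Pplus (mG1 (2:ℝ)) 0 k).toReal * (H (mG1 (2:ℝ)) n k).toReal ≤ 2 := by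
      intro n hn
      rw [den_eq (by norm_num) hn]
      have h1 : (2:ℝ)⁻¹^n ≤ 1 := by
        apply pow_le_one₀ <;> norm_num
      have h2 : ∑ k ∈ Finset.Icc 1 (n-1), (2:ℝ)⁻¹^k * ((2:ℝ)⁻¹ * (((2:ℝ)-1)⁻¹)^(n-k)) ≤ 1 := by
        have hc : ∀ k ∈ Finset.Icc 1 (n-1),
            (2:ℝ)⁻¹^k * ((2:ℝ)⁻¹ * (((2:ℝ)-1)⁻¹)^(n-k)) ≤ 2⁻¹^k := by
          intro k hk
          norm_num
        calc ∑ k ∈ Finset.Icc 1 (n-1), (2:ℝ)⁻¹^k * ((2:ℝ)⁻¹ * (((2:ℝ)-1)⁻¹)^(n-k))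
            ≤ ∑ k ∈ Finset.Icc 1 (n-1), (2:ℝ)⁻¹^k := Finset.sum_le_sum hc
          _ = (2:ℝ)⁻¹^1 * ((2⁻¹^(n-1) - 1)/(2⁻¹ - 1)) := sum_Icc_geom (by norm_num) 1 n hn
          _ ≤ 1 := by
              have hp : (0:ℝ) ≤ 2⁻¹^(n-1) := by positivity
              have hq : (2:ℝ)⁻¹^(n-1) ≤ 1 := by
                apply pow_le_one₀ <;> norm_num
              rw [show ((2:ℝ)⁻¹^1 * ((2⁻¹^(n-1) - 1)/(2⁻¹ - 1))) = 1 - 2⁻¹^(n-1) by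
                field_simp; ring]
              linarith
      linarith
    have hlow : Tendsto (fun n : ℕ => (1 + 2⁻¹ * ((n - 1 - i : ℕ) : ℝ)) / 2) atTop atTop := by
      apply Tendsto.atTop_div_const (by norm_num)
      apply tendsto_atTop_add_const_left
      apply Tendsto.const_mul_atTop (by norm_num : (0:ℝ) < 2⁻¹)
      exact tendsto_natCast_atTop_atTop.comp
        ((tendsto_sub_atTop_nat i).comp (tendsto_sub_atTop_nat 1))
    apply tendsto_atTop_mono' _ _ hlow
    filter_upwards [eventually_ge_atTop (i+1)] with n hn
    have hn1 : 1 ≤ n := by omega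
    unfold ratio
    rw [hnum n hn]
    have hd := den_pos (show (1:ℝ) < 2 by norm_num) hn1
    have hd2 := hden_le n hn1
    apply div_le_div_of_nonneg_left _ hd hd2
    have : (0:ℝ) ≤ ((n - 1 - i : ℕ) : ℝ) := Nat.cast_nonneg _
    linarith
  · -- z > 2
    set y : ℝ := z⁻¹ with hydef
    set s : ℝ := (z-1)⁻¹ with hsdef
    set w : ℝ := max y s with hwdef
    have hy0 : 0 < y := by positivity
    have hs0 : 0 < s := by positivity
    have hw0 : 0 < w := lt_of_lt_of_le hy0 (le_max_left _ _)
    have hy1 : y < 1 := by rw [hydef, inv_lt_one_iff₀]; right; exact hz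
    have hs1 : s < 1 := by rw [hsdef, inv_lt_one_iff₀]; right; linarith
    have hw1 : w < 1 := max_lt hy1 hs1
    have hden_le : ∀ n : ℕ, 1 ≤ n →
        ∑ k ∈ Finset.Icc 1 n, (Pplus (mG1 z) 0 k).toReal * (H (mG1 z) n k).toReal
          ≤ (1 + (n:ℝ)) * w^n := by
      intro n hn
      rw [den_eq hz hn]
      have h1 : z⁻¹^n ≤ w^n := by
        apply pow_le_pow_left₀ (le_of_lt hy0) (le_max_left _ _)
      have h2 : ∑ k ∈ Finset.Icc 1 (n-1), z⁻¹^k * (z⁻¹ * ((z-1)⁻¹)^(n-k))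
          ≤ (n:ℝ) * w^n := by
        have hc : ∀ k ∈ Finset.Icc 1 (n-1),
            z⁻¹^k * (z⁻¹ * ((z-1)⁻¹)^(n-k)) ≤ w^n := by
          intro k hk
          have hk' := Finset.mem_Icc.mp hk
          have e1 : z⁻¹^k * (z⁻¹ * ((z-1)⁻¹)^(n-k)) = y^(k+1) * s^(n-k) := by
            rw [hydef, hsdef, pow_succ]; ring
          rw [e1]
          calc y^(k+1) * s^(n-k) ≤ w^(k+1) * w^(n-k) := by
                apply mul_le_mul
                · exact pow_le_pow_left₀ (le_of_lt hy0) (le_max_left _ _) _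
                · exact pow_le_pow_left₀ (le_of_lt hs0) (le_max_right _ _) _
                · positivity
                · positivity
            _ = w^(n+1) := by rw [← pow_add]; congr 1; omega
            _ ≤ w^n := by
                apply pow_le_pow_of_le_one (le_of_lt hw0) (le_of_lt hw1)
                omega
        calc ∑ k ∈ Finset.Icc 1 (n-1), z⁻¹^k * (z⁻¹ * ((z-1)⁻¹)^(n-k))
            ≤ ∑ k ∈ Finset.Icc 1 (n-1), w^n := Finset.sum_le_sum hc
          _ = ((n-1) : ℕ) * w^n := by
              rw [Finset.sum_const, Nat.card_Icc, nsmul_eq_mul]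
              norm_num
          _ ≤ (n:ℝ) * w^n := by
              apply mul_le_mul_of_nonneg_right _ (by positivity)
              exact Nat.cast_le.mpr (Nat.sub_le n 1)
      linarith
    have hwnorm : ‖w‖ < 1 := by rw [Real.norm_eq_abs, abs_of_pos hw0]; exact hw1
    have hsummable : Summable (fun n : ℕ => (1 + (n:ℝ)) * w^n) := by
      have s1 : Summable (fun n : ℕ => (n:ℝ) * w^n) := by
        have := summable_pow_mul_geometric_of_norm_lt_one 1 hwnorm (R := ℝ)
        simpa using this
      have s2 : Summable (fun n : ℕ => w^n) := summable_geometric_of_lt_one (le_of_lt hw0) hw1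
      have := s2.add s1
      apply this.congr
      intro n; ring
    have hg0 : Tendsto (fun n : ℕ => (1 + (n:ℝ)) * w^n) atTop (𝓝 0) :=
      hsummable.tendsto_atTop_zero
    have hden0 : Tendsto (fun n : ℕ =>
        ∑ k ∈ Finset.Icc 1 n, (Pplus (mG1 z) 0 k).toReal * (H (mG1 z) n k).toReal)
        atTop (𝓝 0) := by
      apply tendsto_of_tendsto_of_tendsto_of_le_of_le' tendsto_const_nhds hg0
      · filter_upwards [eventually_ge_atTop 1] with n hn
        exact le_of_lt (den_pos hz hn)
      · filter_upwards [eventually_ge_atTop 1] with n hn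
        exact hden_le n hn
    have hdenInv : Tendsto (fun n : ℕ =>
        (∑ k ∈ Finset.Icc 1 n, (Pplus (mG1 z) 0 k).toReal * (H (mG1 z) n k).toReal)⁻¹)
        atTop atTop := by
      apply Filter.Tendsto.inv_tendsto_nhdsGT_zero
      rw [tendsto_nhdsWithin_iff]
      refine ⟨hden0, ?_⟩
      filter_upwards [eventually_ge_atTop 1] with n hn
      exact den_pos hz hn
    apply tendsto_atTop_mono' _ _ hdenInv
    filter_upwards [eventually_ge_atTop (i+1)] with n hn
    have hn1 : 1 ≤ n := by omega
    unfold ratio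
    rw [← one_div]
    exact (div_le_div_iff_of_pos_right (den_pos hz hn1)).mpr (num_ge_one hz hn)
lemma tsum_ite_mul (f : ℕ → ℝ≥0∞) (i : ℕ) :
    ∑' l : ℕ, (if i = l then (1:ℝ≥0∞) else 0) * f l = f i := by
  rw [tsum_eq_single i (fun b hb => by rw [if_neg (Ne.symm hb), zero_mul])]
  rw [if_pos rfl, one_mul]

lemma mul_ite_tsum (f : ℕ → ℝ≥0∞) (j : ℕ) :
    ∑' l : ℕ, f l * (if l = j then (1:ℝ≥0∞) else 0) = f j := by
  rw [tsum_eq_single j (fun b hb => by rw [if_neg hb, mul_zero])]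
  rw [if_pos rfl, mul_one]

lemma matPow_succ_left (P : ℕ → ℕ → ℝ≥0∞) (k i j : ℕ) :
    matPow P (k+1) i j = ∑' l : ℕ, P i l * matPow P k l j := by
  induction k generalizing j with
  | zero =>
    show (∑' l : ℕ, matPow P 0 i l * P l j) = _
    simp only [matPow]
    rw [tsum_ite_mul (fun l => P l j) i, mul_ite_tsum (P i) j]
  | succ k IH =>
    show (∑' l : ℕ, matPow P (k+1) i l * P l j) = _
    calc (∑' l : ℕ, matPow P (k+1) i l * P l j)
        = ∑' l : ℕ, (∑' m : ℕ, P i m * matPow P k m l) * P l j := by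
          congr 1; funext l; rw [IH]
      _ = ∑' l : ℕ, ∑' m : ℕ, P i m * matPow P k m l * P l j := by
          congr 1; funext l; rw [ENNReal.tsum_mul_right]
      _ = ∑' m : ℕ, ∑' l : ℕ, P i m * matPow P k m l * P l j := ENNReal.tsum_comm
      _ = ∑' m : ℕ, P i m * ∑' l : ℕ, matPow P k m l * P l j := by
          congr 1; funext m
          rw [← ENNReal.tsum_mul_left]
          congr 1; funext l; rw [mul_assoc]
      _ = ∑' m : ℕ, P i m * matPow P (k+1) m j := rfl

lemma green_eq (P : ℕ → ℕ → ℝ≥0∞) (i j : ℕ) :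
    green P i j = (if i = j then 1 else 0) + ∑' l : ℕ, P i l * green P l j := by
  rw [green, tsum_eq_zero_add' ENNReal.summable]
  congr 1
  calc (∑' k : ℕ, matPow P (k+1) i j)
      = ∑' k : ℕ, ∑' l : ℕ, P i l * matPow P k l j := by
        congr 1; funext k; rw [matPow_succ_left]
    _ = ∑' l : ℕ, ∑' k : ℕ, P i l * matPow P k l j := ENNReal.tsum_comm
    _ = ∑' l : ℕ, P i l * green P l j := by
        congr 1; funext l; rw [ENNReal.tsum_mul_left]; rfl

lemma green_lt_top_of_lyapunov {P : ℕ → ℕ → ℝ≥0∞} {h c : ℕ → ℝ≥0∞}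
    (hdef : ∀ i, c i + ∑' j : ℕ, P i j * h j ≤ h i)
    (hfin : ∀ i, h i < ∞) (hc : ∀ j, 0 < c j) : ∀ i j, green P i j < ∞ := by
  have base : ∀ i, (∑' j : ℕ, matPow P 0 i j * h j) = h i := by
    intro i
    show (∑' j : ℕ, (if i = j then (1:ℝ≥0∞) else 0) * h j) = h i
    exact tsum_ite_mul h i
  have key : ∀ N i, (∑' j : ℕ, matPow P N i j * c j) + (∑' j : ℕ, matPow P (N+1) i j * h j)
      ≤ ∑' j : ℕ, matPow P N i j * h j := by
    intro N i
    have e : (∑' j : ℕ, matPow P (N+1) i j * h j)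
        = ∑' l : ℕ, matPow P N i l * ∑' j : ℕ, P l j * h j := by
      calc (∑' j : ℕ, matPow P (N+1) i j * h j)
          = ∑' j : ℕ, ∑' l : ℕ, matPow P N i l * P l j * h j := by
            congr 1; funext j
            show (∑' l : ℕ, matPow P N i l * P l j) * h j = _
            rw [ENNReal.tsum_mul_right]
        _ = ∑' l : ℕ, ∑' j : ℕ, matPow P N i l * P l j * h j := ENNReal.tsum_comm
        _ = ∑' l : ℕ, matPow P N i l * ∑' j : ℕ, P l j * h j := by
            congr 1; funext l
            rw [← ENNReal.tsum_mul_left]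
            congr 1; funext j; rw [mul_assoc]
    rw [e, ← ENNReal.tsum_add]
    apply ENNReal.tsum_le_tsum
    intro l
    calc matPow P N i l * c l + matPow P N i l * (∑' j : ℕ, P l j * h j)
        = matPow P N i l * (c l + ∑' j : ℕ, P l j * h j) := (mul_add _ _ _).symm
      _ ≤ matPow P N i l * h l := mul_le_mul_right (hdef l) _
  have hpartial : ∀ N i, (∑ k ∈ Finset.range N, ∑' j : ℕ, matPow P k i j * c j)
      + (∑' j : ℕ, matPow P N i j * h j) ≤ h i := by
    intro N i
    induction N with
    | zero => simp [base i]
    | succ N IH =>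
      rw [Finset.sum_range_succ]
      calc (∑ k ∈ Finset.range N, ∑' j : ℕ, matPow P k i j * c j)
            + (∑' j : ℕ, matPow P N i j * c j) + (∑' j : ℕ, matPow P (N+1) i j * h j)
          = (∑ k ∈ Finset.range N, ∑' j : ℕ, matPow P k i j * c j)
            + ((∑' j : ℕ, matPow P N i j * c j) + (∑' j : ℕ, matPow P (N+1) i j * h j)) := by
            rw [add_assoc]
        _ ≤ (∑ k ∈ Finset.range N, ∑' j : ℕ, matPow P k i j * c j)
            + (∑' j : ℕ, matPow P N i j * h j) := add_le_add_right (key N i) _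
        _ ≤ h i := IH
  intro i j
  have hbound : green P i j * c j ≤ h i := by
    calc green P i j * c j = ∑' k : ℕ, matPow P k i j * c j := ENNReal.tsum_mul_right.symm
      _ ≤ ∑' k : ℕ, ∑' j' : ℕ, matPow P k i j' * c j' :=
          ENNReal.tsum_le_tsum (fun k => ENNReal.le_tsum j)
      _ ≤ h i := by
          rw [ENNReal.tsum_eq_iSup_sum' (fun N => Finset.range N) Finset.exists_nat_subset_range]
          apply iSup_le
          intro N
          exact le_trans le_self_add (hpartial N i)
  by_contra htop
  push_neg at htop
  rw [top_le_iff.mp htop] at hbound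
  rw [ENNReal.top_mul (ne_of_gt (hc j))] at hbound
  exact absurd (lt_of_le_of_lt hbound (hfin i)) (lt_irrefl _)

lemma tsum_ofReal_geom (x c : ℝ) (h0 : 0 ≤ x) (h1 : x < 1) (hc : 0 ≤ c) :
    ∑' l : ℕ, ENNReal.ofReal (c * x ^ l) = ENNReal.ofReal (c / (1 - x)) := by
  rw [← ENNReal.ofReal_tsum_of_nonneg (fun l => by positivity)
      ((summable_geometric_of_lt_one h0 h1).mul_left c)]
  congr 1
  rw [tsum_mul_left, tsum_geometric_of_lt_one h0 h1, div_eq_mul_inv]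

lemma green_finite_of_lt {z : ℝ} (hz : 1 < z) (hz2 : z < 2) :
    ∀ i j, green (mG1 z) i j < ∞ := by
  have hz0 : (0:ℝ) < z := lt_trans one_pos hz
  have hz1 : (0:ℝ) < z - 1 := by linarith
  set ε : ℝ := min ((2-z)/z) ((z-2)^2/z^2) with hεdef
  have hε : 0 < ε := by
    apply lt_min
    · exact div_pos (by linarith) hz0
    · have h1 : z - 2 ≠ 0 := by intro h; linarith
      have : (0:ℝ) < (z-2)^2 := by positivity
      positivity
  apply green_lt_top_of_lyapunov
    (h := fun i => ENNReal.ofReal ((z/2)^i)) (c := fun i => ENNReal.ofReal (ε * (z/2)^i))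
  · intro i
    match i with
    | 0 =>
      have hterm : ∀ j : ℕ, mG1 z 0 j * ENNReal.ofReal ((z/2)^j)
          = ENNReal.ofReal (((z-1)/z) * (1/2)^j) := by
        intro j
        rw [mG1_zero, ← ENNReal.ofReal_mul (by positivity)]
        congr 1
        rw [div_pow, pow_succ, one_div, inv_pow]
        field_simp
      simp only [hterm]
      rw [tsum_ofReal_geom _ _ (by norm_num) (by norm_num) (by positivity)]
      rw [← ENNReal.ofReal_add (by positivity) (by positivity)]
      apply ENNReal.ofReal_le_ofReal
      have e1 : ((z-1)/z) / (1 - 1/2) = 2*(z-1)/z := by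
        norm_num
        ring
      have e2 : (2-z)/z + 2*(z-1)/z = 1 := by field_simp; ring
      have e3 : ε ≤ (2-z)/z := min_le_left _ _
      rw [e1]
      simp only [pow_zero, mul_one]
      linarith
    | (i+1) =>
      have hg : Function.Injective (fun l : ℕ => i + l) := fun a b hab => by
        simpa using hab
      have hsupp : Function.support (fun x => mG1 z (i+1) x * ENNReal.ofReal ((z/2)^x))
          ⊆ Set.range (fun l : ℕ => i + l) := by
        intro x hxs
        by_contra hx
        apply hxs
        have hxi : x < i := by
          by_contra hge
          push_neg at hge
          exact hx ⟨x - i, by simp; omega⟩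
        show mG1 z (i+1) x * ENNReal.ofReal ((z/2)^x) = 0
        rw [mG1_pos_zero (by omega) (by omega), zero_mul]
      rw [← hg.tsum_eq hsupp]
      have hterm : ∀ l : ℕ, mG1 z (i+1) (i + l) * ENNReal.ofReal ((z/2)^(i+l))
          = ENNReal.ofReal ((((z-1)/z) * (z/2)^i) * (1/2)^l) := by
        intro l
        rw [mG1_pos (by omega) (by omega), ← ENNReal.ofReal_mul (by positivity)]
        congr 1
        have e : i + l - (i + 1 - 1) + 1 = l + 1 := by omega
        rw [e, pow_add, div_pow, pow_succ, one_div, inv_pow]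
        field_simp
        rw [div_pow, pow_add, pow_add]; field_simp
      simp only [hterm]
      rw [tsum_ofReal_geom _ _ (by norm_num) (by norm_num) (by positivity)]
      rw [← ENNReal.ofReal_add (by positivity) (by positivity)]
      apply ENNReal.ofReal_le_ofReal
      have e1 : (((z-1)/z) * (z/2)^i) / (1 - 1/2) = (2*(z-1)/z) * (z/2)^i := by
        norm_num
        ring
      rw [e1]
      have hq : (0:ℝ) ≤ (z/2)^i := by positivity
      have hkey : (z-2)^2/z^2*(z/2) + 2*(z-1)/z = z/2 := by field_simp; ring
      have hε2 : ε ≤ (z-2)^2/z^2 := min_le_right _ _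
      have hunit : ε*(z/2) + 2*(z-1)/z ≤ z/2 := by
        have := mul_le_mul_of_nonneg_right hε2 (show (0:ℝ) ≤ z/2 by positivity)
        linarith
      have := mul_le_mul_of_nonneg_right hunit hq
      calc ε * (z/2)^(i+1) + (2*(z-1)/z) * (z/2)^i
          = (ε*(z/2) + 2*(z-1)/z) * (z/2)^i := by rw [pow_succ]; ring
        _ ≤ (z/2) * (z/2)^i := this
        _ = (z/2)^(i+1) := by rw [pow_succ]; ring
  · intro i
    exact ENNReal.ofReal_lt_top
  · intro j
    apply ENNReal.ofReal_pos.mpr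
    positivity

lemma mG1_ne_top {z : ℝ} (i l : ℕ) : mG1 z i l ≠ ∞ := by
  unfold mG1
  split
  · exact ENNReal.ofReal_ne_top
  split
  · exact ENNReal.ofReal_ne_top
  · simp

lemma not_green_finite_of_ge {z : ℝ} (hz : 1 < z) (hz2 : 2 ≤ z)
    (hfin : ∀ i j : ℕ, green (mG1 z) i j < ∞) : False := by
  have hz0 : (0:ℝ) < z := lt_trans one_pos hz
  have hz1 : (0:ℝ) < z - 1 := by linarith
  set V : ℕ → ℝ := fun i => (green (mG1 z) i 0).toReal with hVdef
  have hV0 : ∀ i, 0 ≤ V i := fun i => ENNReal.toReal_nonneg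
  set aR : ℕ → ℝ := fun k => (z-1)/z^(k+1) with haRdef
  have haR0 : ∀ k, 0 ≤ aR k := fun k => by positivity
  have hgne : ∀ l, green (mG1 z) l 0 ≠ ∞ := fun l => (hfin l 0).ne
  have hTne : ∀ i, (∑' l : ℕ, mG1 z i l * green (mG1 z) l 0) ≠ ∞ := by
    intro i
    have hle : (∑' l : ℕ, mG1 z i l * green (mG1 z) l 0) ≤ green (mG1 z) i 0 := by
      rw [green_eq (mG1 z) i 0]; exact le_add_self
    exact ne_top_of_le_ne_top (hfin i 0).ne hle
  have htsum : ∀ i, ((∑' l : ℕ, mG1 z i l * green (mG1 z) l 0)).toReal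
      = ∑' l : ℕ, (mG1 z i l).toReal * V l := by
    intro i
    rw [ENNReal.tsum_toReal_eq (fun l => ENNReal.mul_ne_top (mG1_ne_top i l) (hgne l))]
    congr 1
    funext l
    rw [ENNReal.toReal_mul]
  have hsummable : ∀ i, Summable (fun l : ℕ => (mG1 z i l).toReal * V l) := by
    intro i
    have h := ENNReal.summable_toReal (hTne i)
    apply h.congr
    intro l
    rw [ENNReal.toReal_mul]
  have hE0 : V 0 = 1 + ∑' l : ℕ, (mG1 z 0 l).toReal * V l := by
    have h := green_eq (mG1 z) 0 0
    rw [if_pos rfl] at h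
    have h2 : V 0 = ((1 : ℝ≥0∞) + ∑' l : ℕ, mG1 z 0 l * green (mG1 z) l 0).toReal := by
      rw [hVdef]; exact congrArg ENNReal.toReal h
    rw [h2, ENNReal.toReal_add ENNReal.one_ne_top (hTne 0), ENNReal.toReal_one, htsum 0]
  have hEi : ∀ i, 1 ≤ i → V i = ∑' l : ℕ, (mG1 z i l).toReal * V l := by
    intro i hi
    have h := green_eq (mG1 z) i 0
    rw [if_neg (by omega), zero_add] at h
    have h2 : V i = ((∑' l : ℕ, mG1 z i l * green (mG1 z) l 0)).toReal := by
      rw [hVdef]; exact congrArg ENNReal.toReal h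
    rw [h2, htsum i]
  -- reindexed equations
  have hEre : ∀ i, 1 ≤ i → (V i = ∑' k : ℕ, aR k * V (i - 1 + k)
      ∧ Summable (fun k : ℕ => aR k * V (i - 1 + k))) := by
    intro i hi
    have hg : Function.Injective (fun l : ℕ => i - 1 + l) := fun a b hab => by simpa using hab
    have hsupp : ∀ x ∉ Set.range (fun l : ℕ => i - 1 + l),
        (mG1 z i x).toReal * V x = 0 := by
      intro x hx
      have hxi : x < i - 1 := by
        by_contra hge
        push_neg at hge
        exact hx ⟨x - (i-1), by simp; omega⟩
      rw [mG1_pos_zero (by omega) hxi]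
      simp
    have hterm : ∀ k : ℕ, (mG1 z i (i - 1 + k)).toReal * V (i - 1 + k)
        = aR k * V (i - 1 + k) := by
      intro k
      rw [mG1_pos (by omega) (by omega)]
      rw [show i - 1 + k - (i-1) + 1 = k + 1 by omega]
      rw [ENNReal.toReal_ofReal (by positivity)]
    constructor
    · rw [hEi i hi, ← hg.tsum_eq (Function.support_subset_iff'.mpr hsupp)]
      exact tsum_congr hterm
    · have hs := (hg.summable_iff hsupp).mpr (hsummable i)
      exact hs.congr hterm
  -- recurrence
  have hrec : ∀ i, 1 ≤ i → V (i+1) = z * V i - (z-1) * V (i-1) := by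
    intro i hi
    obtain ⟨hEq, hSum⟩ := hEre i hi
    obtain ⟨hEq1, _⟩ := hEre (i+1) (by omega)
    simp only [Nat.add_sub_cancel] at hEq1
    have hsplit := Summable.tsum_eq_zero_add hSum
    have hidx : ∀ k : ℕ, aR (k+1) * V (i - 1 + (k+1)) = z⁻¹ * (aR k * V (i+k)) := by
      intro k
      have e1 : i - 1 + (k+1) = i + k := by omega
      have e2 : aR (k+1) = z⁻¹ * aR k := by
        rw [haRdef]
        simp only
        rw [pow_succ]
        field_simp
      rw [e1, e2, mul_assoc]
    rw [tsum_congr hidx, tsum_mul_left, ← hEq1] at hsplit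
    have haR0v : aR 0 = (z-1)/z := by rw [haRdef]; simp
    have hcomb : V i = (z-1)/z * V (i-1) + z⁻¹ * V (i+1) := by
      rw [hEq, hsplit, haR0v]
      simp
    field_simp at hcomb
    linarith
  -- telescoping
  set W0 : ℝ := V 1 - V 0 with hW0def
  have hdiff : ∀ i : ℕ, V (i+1) - V i = (z-1)^i * W0 := by
    intro i
    induction i with
    | zero => simp [hW0def]
    | succ i IH =>
      have h := hrec (i+1) (by omega)
      simp only [Nat.add_sub_cancel] at h
      have : V (i+1+1) - V (i+1) = (z-1) * (V (i+1) - V i) := by rw [h]; ring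
      rw [this, IH, pow_succ]
      ring
  have hVn : ∀ n : ℕ, V n = V 0 + W0 * ∑ t ∈ Finset.range n, (z-1)^t := by
    intro n
    induction n with
    | zero => simp
    | succ n IH =>
      rw [Finset.sum_range_succ]
      have h1 : V (n+1) = V n + (z-1)^n * W0 := by linarith [hdiff n]
      rw [h1, IH]
      ring
  -- geometric sums
  have hq0 : (0:ℝ) ≤ z⁻¹ := by positivity
  have hq1 : z⁻¹ < 1 := by rw [inv_lt_one_iff₀]; right; exact hz
  have hx0 : (0:ℝ) ≤ (z-1) * z⁻¹ := by positivity
  have hx1 : (z-1) * z⁻¹ < 1 := by rw [mul_inv_lt_iff₀ hz0, one_mul]; linarith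
  have haR_eq : ∀ j : ℕ, aR j = ((z-1)*z⁻¹) * z⁻¹^j := by
    intro j
    rw [haRdef]
    simp only
    rw [pow_succ, inv_pow]
    field_simp
  have hSummable_aR : Summable aR := by
    apply Summable.congr (((summable_geometric_of_lt_one hq0 hq1).mul_left ((z-1)*z⁻¹)))
    intro j; rw [haR_eq j]
  have hsum_aR : ∑' j : ℕ, aR j = 1 := by
    rw [tsum_congr haR_eq, tsum_mul_left, tsum_geometric_of_lt_one hq0 hq1]
    rw [show (1 - z⁻¹) = (z-1)*z⁻¹ by field_simp]
    rw [mul_inv_cancel₀ (by positivity)]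
  have haRr_eq : ∀ j : ℕ, aR j * (z-1)^j = ((z-1)*z⁻¹) * ((z-1)*z⁻¹)^j := by
    intro j
    rw [haR_eq j, mul_pow]
    ring
  have hSummable_aRr : Summable (fun j : ℕ => aR j * (z-1)^j) := by
    apply Summable.congr (((summable_geometric_of_lt_one hx0 hx1).mul_left ((z-1)*z⁻¹)))
    intro j; rw [haRr_eq j]
  have hsum_aRr : ∑' j : ℕ, aR j * (z-1)^j = z - 1 := by
    rw [tsum_congr haRr_eq, tsum_mul_left, tsum_geometric_of_lt_one hx0 hx1]
    rw [show (1 - (z-1)*z⁻¹) = z⁻¹ by field_simp; ring]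
    rw [inv_inv]
    field_simp
  -- the key sum  ∑ aR j * S j = 1
  have hsum_aRS : Summable (fun j : ℕ => aR j * (∑ t ∈ Finset.range j, (z-1)^t))
      ∧ ∑' j : ℕ, aR j * (∑ t ∈ Finset.range j, (z-1)^t) = 1 := by
    rcases eq_or_lt_of_le hz2 with h2 | h2
    · -- z = 2
      have hz2' : z = 2 := h2.symm
      subst hz2'
      have hS : ∀ j : ℕ, ∑ t ∈ Finset.range j, ((2:ℝ)-1)^t = (j:ℝ) := by
        intro j; norm_num
      have hterm : ∀ j : ℕ, aR j * (∑ t ∈ Finset.range j, ((2:ℝ)-1)^t)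
          = 2⁻¹ * ((j:ℝ) * 2⁻¹^j) := by
        intro j
        rw [hS j, haR_eq j]
        norm_num
        ring
      have hs : Summable (fun j : ℕ => (j:ℝ) * 2⁻¹^j) := by
        have h21 : ‖(2⁻¹ : ℝ)‖ < 1 := by rw [Real.norm_eq_abs, abs_of_pos] <;> norm_num
        have := summable_pow_mul_geometric_of_norm_lt_one (R := ℝ) 1 h21
        apply this.congr
        intro j
        simp
      constructor
      · apply Summable.congr (hs.mul_left 2⁻¹)
        intro j; rw [hterm j]
      · rw [tsum_congr hterm, tsum_mul_left]
        have h21 : ‖(2⁻¹ : ℝ)‖ < 1 := by rw [Real.norm_eq_abs, abs_of_pos] <;> norm_num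
        rw [tsum_coe_mul_geometric_of_norm_lt_one h21]
        norm_num
    · -- z > 2
      have hrne : z - 1 ≠ 1 := by intro h; linarith
      have hz2ne : z - 2 ≠ 0 := by intro h; linarith
      have hterm : ∀ j : ℕ, aR j * (∑ t ∈ Finset.range j, (z-1)^t)
          = (z-2)⁻¹ * (aR j * (z-1)^j - aR j) := by
        intro j
        rw [geom_sum_eq hrne]
        rw [show z - 1 - 1 = z - 2 by ring]
        field_simp
      constructor
      · apply Summable.congr ((hSummable_aRr.sub hSummable_aR).mul_left (z-2)⁻¹)
        intro j; rw [hterm j]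
      · rw [tsum_congr hterm, tsum_mul_left,
          Summable.tsum_sub hSummable_aRr hSummable_aR, hsum_aR, hsum_aRr]
        field_simp
        ring
  obtain ⟨hsummS, hsum1⟩ := hsum_aRS
  -- boundary equation
  have hsplitV : ∑' l : ℕ, (mG1 z 0 l).toReal * V l = ∑' l : ℕ, aR l * V l := by
    apply tsum_congr
    intro l
    rw [mG1_zero, ENNReal.toReal_ofReal (by positivity)]
  have hsummaRV : Summable (fun l : ℕ => aR l * V l) := by
    apply (hsummable 0).congr
    intro l
    rw [mG1_zero, ENNReal.toReal_ofReal (by positivity)]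
  have hper : ∀ l : ℕ, aR l * V l
      = V 0 * aR l + W0 * (aR l * (∑ t ∈ Finset.range l, (z-1)^t)) := by
    intro l
    rw [hVn l]
    ring
  have hE0' : V 0 = 1 + (V 0 * 1 + W0 * 1) := by
    calc V 0 = 1 + ∑' l : ℕ, (mG1 z 0 l).toReal * V l := hE0
      _ = 1 + ∑' l : ℕ, (V 0 * aR l + W0 * (aR l * (∑ t ∈ Finset.range l, (z-1)^t))) := by
          rw [hsplitV, tsum_congr hper]
      _ = 1 + (V 0 * 1 + W0 * 1) := by
          rw [Summable.tsum_add (hSummable_aR.mul_left (V 0)) (hsummS.mul_left W0),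
            tsum_mul_left, tsum_mul_left, hsum_aR, hsum1]
  have hW0 : W0 = -1 := by linarith
  -- contradiction
  have hSn : ∀ n : ℕ, (n:ℝ) ≤ ∑ t ∈ Finset.range n, (z-1)^t := by
    intro n
    calc (n:ℝ) = ∑ _t ∈ Finset.range n, (1:ℝ) := by simp
      _ ≤ ∑ t ∈ Finset.range n, (z-1)^t :=
          Finset.sum_le_sum (fun t _ => one_le_pow₀ (by linarith))
  set n := ⌈V 0⌉₊ + 1 with hndef
  have hvn := hVn n
  rw [hW0] at hvn
  have hn : (V 0 : ℝ) < (n:ℝ) := by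
    have := Nat.le_ceil (V 0)
    rw [hndef]
    push_cast
    linarith
  have hneg : V n < 0 := by
    have := hSn n
    nlinarith
  linarith [hV0 n]

theorem mG1_ratio_limits_and_transience (z : ℝ) (hz : 1 < z) :
    (z < 2 → ∀ i : ℕ,
      Tendsto (fun n => ratio (mG1 z) i n) atTop (𝓝 ((z - 1) ^ i / (2 - z)))) ∧
    (2 ≤ z → ∀ i : ℕ, Tendsto (fun n => ratio (mG1 z) i n) atTop atTop) ∧
    ((∀ i j : ℕ, green (mG1 z) i j < ∞) ↔ z < 2) := by
  refine ⟨fun h2 i => ratio_tendsto_lt hz h2 i, fun h2 i => ratio_tendsto_ge hz h2 i, ?_⟩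
  constructor
  · intro hfin
    by_contra hge
    push_neg at hge
    exact not_green_finite_of_ge hz hge hfin
  · intro h2
    exact green_finite_of_lt hz h2
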